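/- Every finite abstract simplicial complex can be realized as Δ(S) for some finite unitary ideal S: given a simplicial complex on vertex set {v₁,...,v_k}, assign distinct primes p₁,...,p_k to the vertices and let S be the set of products p_{a₁}⋯p_{a_r} over faces {v_{a₁},...,v_{a_r}}; then S is a unitary ideal and its associated complex Δ(S) is isomorphic to the given complex. -/
import Mathlib

lemma stmt_4_aux (k : ℕ) (p : Fin k → ℕ) (hp : ∀ i, (p i).Prime)
    (σ : Finset (Fin k)) (d : ℕ) (hd : d ∣ σ.prod p) :
    ∃ τ ⊆ σ, d = τ.prod p := by
  induction σ using Finset.induction generalizing d with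
  | empty =>
    refine ⟨∅, le_refl _, ?_⟩
    simpa using Nat.eq_one_of_dvd_one (by simpa using hd)
  | @insert a s ha ih =>
    rw [Finset.prod_insert ha] at hd
    by_cases hqd : p a ∣ d
    · obtain ⟨d', rfl⟩ := hqd
      have hd' : d' ∣ s.prod p :=
        (mul_dvd_mul_iff_left (hp a).ne_zero).mp hd
      obtain ⟨τ, hτs, rfl⟩ := ih _ hd'
      refine ⟨insert a τ, Finset.insert_subset_insert _ hτs, ?_⟩
      rw [Finset.prod_insert (fun h => ha (hτs h))]
    · have hco : Nat.Coprime d (p a) :=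
        Nat.Coprime.symm (((hp a).coprime_iff_not_dvd).mpr hqd)
      have : d ∣ s.prod p := hco.dvd_of_dvd_mul_left hd
      obtain ⟨τ, hτs, rfl⟩ := ih _ this
      exact ⟨τ, hτs.trans (Finset.subset_insert _ _), rfl⟩

theorem stmt_4 (k : ℕ) (Δ : Finset (Finset (Fin k)))
    (hΔ : ∀ σ ∈ Δ, ∀ τ, τ ⊆ σ → τ ∈ Δ) (hΔne : Δ.Nonempty)
    (p : Fin k → ℕ) (hp : ∀ i, (p i).Prime) (hinj : Function.Injective p)
    (S : Set ℕ) (hS : S = {n : ℕ | ∃ σ ∈ Δ, n = σ.prod p}) :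
    (∀ s ∈ S, 0 < s) ∧
    (∀ s ∈ S, ∀ d : ℕ, d ∣ s → Nat.gcd d (s / d) = 1 → d ∈ S) ∧
    (∀ σ : Finset (Fin k),
      σ ∈ Δ ↔
        ((∀ q ∈ σ.image p, IsPrimePow q ∧ q ∈ S) ∧
          ((σ.image p : Set ℕ)).Pairwise Nat.Coprime ∧
          (σ.image p).prod id ∈ S)) := by
  subst hS
  have hsub : ∀ σ τ : Finset (Fin k), σ.prod p = τ.prod p → σ ⊆ τ := by
    intro σ τ h i hi
    have : p i ∣ τ.prod p := h ▸ Finset.dvd_prod_of_mem p hi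
    obtain ⟨j, hj, hdvd⟩ := (hp i).prime.exists_mem_finset_dvd this
    have : p i = p j := ((Nat.prime_dvd_prime_iff_eq (hp i) (hp j)).mp hdvd)
    exact hinj this ▸ hj
  have himg : ∀ σ : Finset (Fin k), (σ.image p).prod id = σ.prod p := by
    intro σ
    rw [Finset.prod_image (fun x _ y _ h => hinj h)]; simp
  refine ⟨?_, ?_, ?_⟩
  · rintro s ⟨σ, hσ, rfl⟩
    exact Finset.prod_pos (fun i _ => (hp i).pos)
  · rintro s ⟨σ, hσ, rfl⟩ d hd _
    obtain ⟨τ, hτ, rfl⟩ := stmt_4_aux k p hp σ d hd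
    exact ⟨τ, hΔ σ hσ τ hτ, rfl⟩
  · intro σ
    constructor
    · intro hσ
      refine ⟨?_, ?_, ?_⟩
      · rintro q hq
        obtain ⟨i, hi, rfl⟩ := Finset.mem_image.mp hq
        exact ⟨(hp i).isPrimePow, ⟨{i}, hΔ σ hσ {i} (Finset.singleton_subset_iff.mpr hi),
          (Finset.prod_singleton _ _).symm⟩⟩
      · rintro q hq q' hq' hne
        obtain ⟨i, hi, rfl⟩ := Finset.mem_image.mp (Finset.mem_coe.mp hq)
        obtain ⟨j, hj, rfl⟩ := Finset.mem_image.mp (Finset.mem_coe.mp hq')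
        exact (Nat.coprime_primes (hp i) (hp j)).mpr hne
      · exact ⟨σ, hσ, himg σ⟩
    · rintro ⟨_, _, hprod⟩
      rw [himg σ] at hprod
      obtain ⟨τ, hτ, heq⟩ := hprod
      have : σ ⊆ τ := hsub σ τ heq
      exact hΔ τ hτ σ this
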